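/- For every integer m ≥ 3, the quaternion group Q8 admits an m-GRR. (In fact, the automorphism group of the explicitly constructed graph Δ on Q8×{0,…,m−1} described below is exactly the group of right translations by Q8.) -/

import Mathlib

/-- A permutation `σ` of the vertex set is an automorphism of the simple graph `Γ`. -/
def IsGraphAut {V : Type*} (Γ : SimpleGraph V) (σ : Equiv.Perm V) : Prop :=
  ∀ u v : V, Γ.Adj (σ u) (σ v) ↔ Γ.Adj u v

/-- `G` admits an `m`-graphical regular representation: a regular finite simple graph whose
full automorphism group is (the image of) `G`, acting semiregularly with exactly `m` orbits. -/
def HasMGRR (G : Type*) [Group G] (m : ℕ) : Prop :=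
  ∃ (V : Type) (_ : Fintype V) (Γ : SimpleGraph V) (ρ : G →* Equiv.Perm V),
    (∃ d : ℕ, ∀ v : V, (Γ.neighborSet v).ncard = d) ∧
    (∀ g : G, IsGraphAut Γ (ρ g)) ∧
    (∀ σ : Equiv.Perm V, IsGraphAut Γ σ → ∃ g : G, ρ g = σ) ∧
    Function.Injective ⇑ρ ∧
    (∀ (g : G) (v : V), ρ g v = v → g = 1) ∧
    (∃ reps : Fin m → V, ∀ v : V, ∃! i : Fin m, ∃ g : G, ρ g (reps i) = v)

/-- The graph `Δ` on `Q₈ × {0,…,m−1}` built from the generators `i`, `j`: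
block `G_0` induces `Cay(G,{i,i²,i³})`, blocks `G_ℓ` (`1 ≤ ℓ ≤ m−3`) induce
`Cay(G,{i²})`, block `G_{m−2}` is empty, block `G_{m−1}` induces `Cay(G,{j,j⁻¹})`;
`g_ℓ` is adjacent to `g_{ℓ+1}` and `(ig)_{ℓ+1}` for `ℓ ≤ m−3`; and `g_{m−2}` is adjacent
to `g_{m−1}`, `(ig)_{m−1}` and `(jg)_{m−1}`. -/
def DeltaQ (G : Type*) [Group G] (m : ℕ) (i j : G) : SimpleGraph (G × Fin m) :=
  SimpleGraph.fromRel (fun p q =>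
    (p.2.val = 0 ∧ q.2.val = 0 ∧ q.1 * p.1⁻¹ ∈ ({i, i ^ 2, i ^ 3} : Set G)) ∨
    (1 ≤ p.2.val ∧ p.2.val ≤ m - 3 ∧ p.2 = q.2 ∧ q.1 * p.1⁻¹ = i ^ 2) ∨
    (p.2.val = m - 1 ∧ p.2 = q.2 ∧ q.1 * p.1⁻¹ ∈ ({j, j⁻¹} : Set G)) ∨
    (p.2.val ≤ m - 3 ∧ q.2.val = p.2.val + 1 ∧ (q.1 = p.1 ∨ q.1 = i * p.1)) ∨
    (p.2.val = m - 2 ∧ q.2.val = m - 1 ∧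
      (q.1 = p.1 ∨ q.1 = i * p.1 ∨ q.1 = j * p.1)))

abbrev Q8 := QuaternionGroup 2


lemma q8_isq_ne_one (i j : Q8) (hrel : j⁻¹ * i * j = i⁻¹)
    (hgen : Subgroup.closure ({i, j} : Set Q8) = ⊤) : i ^ 2 ≠ 1 := by
  intro h2
  have hii : i⁻¹ = i := by
    rw [inv_eq_iff_mul_eq_one, ← sq, h2]
  have hcomm : i * j = j * i := by
    have h := hrel
    rw [hii] at h
    calc i * j = j * (j⁻¹ * i * j) := by group
    _ = j * i := by rw [h]
  have hcent : ∀ g : Q8, g ∈ Subgroup.centralizer ({i, j} : Set Q8) := by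
    intro g
    have hle : Subgroup.closure ({i, j} : Set Q8) ≤ Subgroup.centralizer ({i, j} : Set Q8) := by
      rw [Subgroup.closure_le]
      rintro x (rfl | rfl) <;> rw [SetLike.mem_coe, Subgroup.mem_centralizer_iff] <;>
        rintro h (rfl | rfl) <;> simp [hcomm]
    exact hle (by rw [hgen]; trivial)
  have hctr : ({i, j} : Set Q8) ⊆ ↑(Subgroup.center Q8) := by
    rintro x (rfl | rfl) <;> rw [SetLike.mem_coe, Subgroup.mem_center_iff] <;> intro g
    · exact (Subgroup.mem_centralizer_iff.mp (hcent g) x (by simp)).symm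
    · exact (Subgroup.mem_centralizer_iff.mp (hcent g) x (by simp)).symm
  have hc : ∀ y : Q8, y ∈ Subgroup.center Q8 := by
    intro y
    exact (Subgroup.closure_le _ |>.mpr hctr) (by rw [hgen]; trivial)
  have : ∀ x y : Q8, x * y = y * x := fun x y => (Subgroup.mem_center_iff.mp (hc x) y).symm
  exact absurd (this (.a 1) (.xa 0)) (by decide)

namespace S15
variable {m : ℕ} {i j : Q8}

lemma adj_cases (hi4 : i^4 = 1) {g h : Q8} {a b : Fin m}
    (H : (DeltaQ Q8 m i j).Adj (g, a) (h, b)) :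
    (a.val = 0 ∧ b.val = 0 ∧ (h = i*g ∨ h = i^2*g ∨ h = i^3*g)) ∨
    (1 ≤ a.val ∧ a.val ≤ m-3 ∧ a = b ∧ h = i^2*g) ∨
    (a.val = m-1 ∧ a = b ∧ (h = j*g ∨ h = j⁻¹*g)) ∨
    (a.val ≤ m-3 ∧ b.val = a.val+1 ∧ (h = g ∨ h = i*g)) ∨
    (a.val = m-2 ∧ b.val = m-1 ∧ (h = g ∨ h = i*g ∨ h = j*g)) ∨
    (b.val ≤ m-3 ∧ a.val = b.val+1 ∧ (g = h ∨ g = i*h)) ∨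
    (b.val = m-2 ∧ a.val = m-1 ∧ (g = h ∨ g = i*h ∨ g = j*h)) := by
  rw [DeltaQ, SimpleGraph.fromRel_adj] at H
  obtain ⟨hpq, Hr⟩ := H
  dsimp only at Hr
  rcases Hr with (⟨h1,h2,h3⟩|⟨h1,h2,h3,h4⟩|⟨h1,h2,h3⟩|⟨h1,h2,h3⟩|⟨h1,h2,h3⟩) |
    (⟨h1,h2,h3⟩|⟨h1,h2,h3,h4⟩|⟨h1,h2,h3⟩|⟨h1,h2,h3⟩|⟨h1,h2,h3⟩)
  · refine Or.inl ⟨h1, h2, ?_⟩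
    simp only [Set.mem_insert_iff, Set.mem_singleton_iff, mul_inv_eq_iff_eq_mul] at h3
    tauto
  · exact Or.inr (Or.inl ⟨h1, h2, h3, by rw [mul_inv_eq_iff_eq_mul] at h4; exact h4⟩)
  · refine Or.inr (Or.inr (Or.inl ⟨h1, h2, ?_⟩))
    simp only [Set.mem_insert_iff, Set.mem_singleton_iff, mul_inv_eq_iff_eq_mul] at h3
    tauto
  · exact Or.inr (Or.inr (Or.inr (Or.inl ⟨h1, h2, h3⟩)))
  · exact Or.inr (Or.inr (Or.inr (Or.inr (Or.inl ⟨h1, h2, h3⟩))))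
  · -- reversed rule 1
    refine Or.inl ⟨h2, h1, ?_⟩
    simp only [Set.mem_insert_iff, Set.mem_singleton_iff, mul_inv_eq_iff_eq_mul] at h3
    rcases h3 with h3 | h3 | h3
    · right; right
      rw [h3, ← mul_assoc, ← pow_succ, hi4, one_mul]
    · right; left
      rw [h3, ← mul_assoc, ← pow_add, hi4, one_mul]
    · left
      rw [h3, ← mul_assoc, ← pow_succ', hi4, one_mul]
  · -- reversed rule 2
    have hba : b = a := h3
    subst hba
    refine Or.inr (Or.inl ⟨h1, h2, rfl, ?_⟩)
    rw [mul_inv_eq_iff_eq_mul] at h4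
    rw [h4, ← mul_assoc, ← pow_add, hi4, one_mul]
  · -- reversed rule 3
    have hba : b = a := h2
    subst hba
    refine Or.inr (Or.inr (Or.inl ⟨h1, rfl, ?_⟩))
    simp only [Set.mem_insert_iff, Set.mem_singleton_iff, mul_inv_eq_iff_eq_mul] at h3
    rcases h3 with h3 | h3
    · right; rw [h3]; exact (inv_mul_cancel_left j h).symm
    · left; rw [h3]; exact (mul_inv_cancel_left j h).symm
  · exact Or.inr (Or.inr (Or.inr (Or.inr (Or.inr (Or.inl ⟨h1, h2, h3⟩)))))
  · exact Or.inr (Or.inr (Or.inr (Or.inr (Or.inr (Or.inr ⟨h1, h2, h3⟩)))))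

lemma fin_eq_of_val {a b : Fin m} (h : a.val = b.val) : a = b := Fin.ext h

lemma pne_fst {g h : Q8} {a b : Fin m} (hgh : h ≠ g) : (g,a) ≠ (h,b) :=
  fun e => hgh (congrArg Prod.fst e).symm

lemma pne_snd {g h : Q8} {a b : Fin m} (hab : a.val ≠ b.val) : (g,a) ≠ (h,b) :=
  fun e => hab (congrArg (fun p => (Prod.snd p).val) e)

/-- destructor: same level, last block -/
lemma adj_last_last (hi4 : i^4 = 1) (hm : 3 ≤ m) {g h : Q8} {a b : Fin m}
    (ha : a.val = m-1) (hb : b.val = m-1)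
    (H : (DeltaQ Q8 m i j).Adj (g, a) (h, b)) : h = j*g ∨ h = j⁻¹*g := by
  rcases adj_cases hi4 H with ⟨h1,h2,_⟩|⟨h1,h2,_,_⟩|⟨_,_,h3⟩|⟨h1,h2,_⟩|⟨h1,h2,_⟩|⟨h1,h2,_⟩|⟨h1,h2,_⟩
    <;> first | exact h3 | omega

/-- destructor: from level m-2 to m-1 -/
lemma adj_m2_last (hi4 : i^4 = 1) (hm : 3 ≤ m) {g h : Q8} {a b : Fin m}
    (ha : a.val = m-2) (hb : b.val = m-1)
    (H : (DeltaQ Q8 m i j).Adj (g, a) (h, b)) : h = g ∨ h = i*g ∨ h = j*g := by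
  rcases adj_cases hi4 H with ⟨h1,h2,_⟩|⟨h1,h2,hab,_⟩|⟨h1,hab,_⟩|⟨h1,h2,_⟩|⟨_,_,h3⟩|⟨h1,h2,_⟩|⟨h1,h2,_⟩
  · omega
  · have := congrArg Fin.val hab; omega
  · have := congrArg Fin.val hab; omega
  · omega
  · exact h3
  · omega
  · omega

/-- destructor: up one level, staying at or below m-2 -/
lemma adj_up_small (hi4 : i^4 = 1) (hm : 3 ≤ m) {g h : Q8} {a b : Fin m}
    (hab : b.val = a.val + 1) (hb : b.val ≤ m-2)
    (H : (DeltaQ Q8 m i j).Adj (g, a) (h, b)) : h = g ∨ h = i*g := by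
  rcases adj_cases hi4 H with ⟨h1,h2,_⟩|⟨h1,h2,h3,_⟩|⟨h1,h3,_⟩|⟨_,_,h3⟩|⟨h1,h2,_⟩|⟨h1,h2,_⟩|⟨h1,h2,_⟩
  · omega
  · have := congrArg Fin.val h3; omega
  · have := congrArg Fin.val h3; omega
  · exact h3
  · omega
  · omega
  · omega

/-- destructor: both at level 0 -/
lemma adj_zero_zero (hi4 : i^4 = 1) (hm : 3 ≤ m) {g h : Q8} {a b : Fin m}
    (ha : a.val = 0) (hb : b.val = 0)
    (H : (DeltaQ Q8 m i j).Adj (g, a) (h, b)) : h = i*g ∨ h = i^2*g ∨ h = i^3*g := by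
  rcases adj_cases hi4 H with ⟨_,_,h3⟩|⟨h1,h2,_,_⟩|⟨h1,h2,_⟩|⟨h1,h2,_⟩|⟨h1,h2,_⟩|⟨h1,h2,_⟩|⟨h1,h2,_⟩
    <;> first | exact h3 | omega

/-- destructor: same level classification -/
lemma adj_same (hi4 : i^4 = 1) (hm : 3 ≤ m) {g h : Q8} {a b : Fin m}
    (hab : a.val = b.val)
    (H : (DeltaQ Q8 m i j).Adj (g, a) (h, b)) :
    (a.val = 0 ∧ (h = i*g ∨ h = i^2*g ∨ h = i^3*g)) ∨
    (1 ≤ a.val ∧ a.val ≤ m-3 ∧ h = i^2*g) ∨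
    (a.val = m-1 ∧ (h = j*g ∨ h = j⁻¹*g)) := by
  rcases adj_cases hi4 H with ⟨h1,h2,h3⟩|⟨h1,h2,_,h3⟩|⟨h1,_,h3⟩|⟨h1,h2,_⟩|⟨h1,h2,_⟩|⟨h1,h2,_⟩|⟨h1,h2,_⟩
  · exact Or.inl ⟨h1, h3⟩
  · exact Or.inr (Or.inl ⟨h1, h2, h3⟩)
  · exact Or.inr (Or.inr ⟨h1, h3⟩)
  · omega
  · omega
  · omega
  · omega

/-- destructor: cross level general -/
lemma adj_cross (hi4 : i^4 = 1) (hm : 3 ≤ m) {g h : Q8} {a b : Fin m}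
    (hab : b.val = a.val + 1)
    (H : (DeltaQ Q8 m i j).Adj (g, a) (h, b)) :
    (a.val ≤ m-3 ∧ (h = g ∨ h = i*g)) ∨ (a.val = m-2 ∧ b.val = m-1 ∧ (h = g ∨ h = i*g ∨ h = j*g)) := by
  rcases adj_cases hi4 H with ⟨h1,h2,_⟩|⟨h1,h2,h3,_⟩|⟨h1,h3,_⟩|⟨h1,_,h3⟩|⟨h1,h2,h3⟩|⟨h1,h2,_⟩|⟨h1,h2,_⟩
  · omega
  · have := congrArg Fin.val h3; omega
  · have := congrArg Fin.val h3; omega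
  · exact Or.inl ⟨h1, h3⟩
  · exact Or.inr ⟨h1, h2, h3⟩
  · omega
  · omega

/-- destructor: level difference at most one -/
lemma adj_level (hi4 : i^4 = 1) (hm : 3 ≤ m) {g h : Q8} {a b : Fin m}
    (H : (DeltaQ Q8 m i j).Adj (g, a) (h, b)) :
    a.val = b.val ∨ b.val = a.val + 1 ∨ a.val = b.val + 1 := by
  rcases adj_cases hi4 H with ⟨h1,h2,_⟩|⟨_,_,h3,_⟩|⟨_,h3,_⟩|⟨_,h2,_⟩|⟨h1,h2,_⟩|⟨_,h2,_⟩|⟨h1,h2,_⟩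
  · omega
  · have := congrArg Fin.val h3; omega
  · have := congrArg Fin.val h3; omega
  · omega
  · omega
  · omega
  · omega

-- constructors
lemma mk_adj_zero (hm : 3 ≤ m) {g h : Q8} {a b : Fin m}
    (ha : a.val = 0) (hb : b.val = 0) (hne2 : h ≠ g)
    (hr : h * g⁻¹ ∈ ({i, i^2, i^3} : Set Q8)) : (DeltaQ Q8 m i j).Adj (g, a) (h, b) := by
  rw [DeltaQ, SimpleGraph.fromRel_adj]
  exact ⟨pne_fst hne2, Or.inl (Or.inl ⟨ha, hb, hr⟩)⟩

lemma mk_adj_last (hm : 3 ≤ m) {g h : Q8} {a b : Fin m}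
    (ha : a.val = m-1) (hb : b.val = m-1) (hne2 : h ≠ g)
    (hr : h * g⁻¹ ∈ ({j, j⁻¹} : Set Q8)) : (DeltaQ Q8 m i j).Adj (g, a) (h, b) := by
  rw [DeltaQ, SimpleGraph.fromRel_adj]
  exact ⟨pne_fst hne2, Or.inl (Or.inr (Or.inr (Or.inl ⟨ha, fin_eq_of_val (ha.trans hb.symm), hr⟩)))⟩

lemma mk_adj_up (hm : 3 ≤ m) {g h : Q8} {a b : Fin m}
    (ha : a.val ≤ m-3) (hb : b.val = a.val + 1)
    (hr : h = g ∨ h = i*g) : (DeltaQ Q8 m i j).Adj (g, a) (h, b) := by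
  rw [DeltaQ, SimpleGraph.fromRel_adj]
  exact ⟨pne_snd (by omega), Or.inl (Or.inr (Or.inr (Or.inr (Or.inl ⟨ha, hb, hr⟩))))⟩

lemma mk_adj_up2 (hm : 3 ≤ m) {g h : Q8} {a b : Fin m}
    (ha : a.val = m-2) (hb : b.val = m-1)
    (hr : h = g ∨ h = i*g ∨ h = j*g) : (DeltaQ Q8 m i j).Adj (g, a) (h, b) := by
  rw [DeltaQ, SimpleGraph.fromRel_adj]
  exact ⟨pne_snd (by omega), Or.inl (Or.inr (Or.inr (Or.inr (Or.inr ⟨ha, hb, hr⟩))))⟩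

lemma gcancel {x y g : Q8} (h : x * g = y * g) : x = y := mul_right_cancel h

lemma pfst {m : ℕ} {x y : Q8} {a b : Fin m} (h : (x,a) = (y,b)) : x = y := by
  have := congrArg Prod.fst h
  exact this

lemma fst_ne {p q : Q8 × Fin m} (h : p ≠ q) (h2 : p.2 = q.2) : p.1 ≠ q.1 :=
  fun e => h (Prod.ext e h2)

lemma facts_pow : ∀ i j : Q8, i^4=1 → j^2=i^2 → j⁻¹*i*j=i⁻¹ → i^2 ≠ 1 →
    (i ≠ 1 ∧ i^2 ≠ 1 ∧ i^3 ≠ 1 ∧ i ≠ i^2 ∧ i ≠ i^3 ∧ i^2 ≠ i^3) := by decide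

lemma facts_j : ∀ i j : Q8, i^4=1 → j^2=i^2 → j⁻¹*i*j=i⁻¹ → i^2 ≠ 1 →
    (j ≠ 1 ∧ j⁻¹ ≠ 1 ∧ j⁻¹ ≠ j*j ∧ j ≠ j⁻¹*j⁻¹ ∧ j ≠ j⁻¹) := by decide

lemma eq_one_of_mul_left {x g : Q8} (h : x * g = g) : x = 1 := mul_eq_right.mp h

/-- a triangle inside a single block forces block 0 -/
lemma tri_same (hi4 : i^4 = 1) (hj2 : j^2 = i^2) (hrel : j⁻¹*i*j = i⁻¹) (hne : i^2 ≠ 1) (hm : 3 ≤ m)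
    {pg qg rg : Q8} {pa qa ra : Fin m}
    (hq : qa.val = pa.val) (hr : ra.val = pa.val)
    (Apq : (DeltaQ Q8 m i j).Adj (pg,pa) (qg,qa)) (Apr : (DeltaQ Q8 m i j).Adj (pg,pa) (rg,ra))
    (Aqr : (DeltaQ Q8 m i j).Adj (qg,qa) (rg,ra)) : pa.val = 0 := by
  obtain ⟨F1,F2,F3,F4,F5,F6⟩ := facts_pow i j hi4 hj2 hrel hne
  obtain ⟨G1,G2,G3,G4,G5⟩ := facts_j i j hi4 hj2 hrel hne
  have hqr : rg ≠ qg :=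
    fun e => (fst_ne Aqr.ne (fin_eq_of_val (show qa.val = ra.val by omega))) e.symm
  rcases adj_same hi4 hm (by omega) Apq with ⟨h0,_⟩|⟨h1,h2,hq'⟩|⟨hlast,hq'⟩
  · exact h0
  · rcases adj_same hi4 hm (by omega) Apr with ⟨h0',_⟩|⟨_,_,hr'⟩|⟨hlast',_⟩
    · omega
    · exact absurd (hr'.trans hq'.symm) hqr
    · omega
  · rcases adj_same hi4 hm (by omega) Apr with ⟨h0',_⟩|⟨h1',h2',_⟩|⟨_,hr'⟩
    · omega
    · omega
    · rcases adj_same hi4 hm (by omega) Aqr with ⟨h0',_⟩|⟨h1',h2',_⟩|⟨_,hqr'⟩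
      · omega
      · omega
      · rcases hq' with hq' | hq' <;> rcases hr' with hr' | hr' <;>
          rcases hqr' with hqr' | hqr'
        · exact absurd (hr'.trans hq'.symm) hqr
        · exact absurd (hr'.trans hq'.symm) hqr
        · -- qg = j*pg, rg = j⁻¹*pg, rg = j*qg
          rw [hr', hq', ← mul_assoc] at hqr'
          exact absurd (gcancel hqr') G3
        · -- qg = j*pg, rg = j⁻¹*pg, rg = j⁻¹*qg
          rw [hr', hq', inv_mul_cancel_left] at hqr'
          exact absurd (eq_one_of_mul_left hqr') G2
        · -- qg = j⁻¹*pg, rg = j*pg, rg = j*qg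
          rw [hr', hq', mul_inv_cancel_left] at hqr'
          exact absurd (eq_one_of_mul_left hqr') G1
        · -- qg = j⁻¹*pg, rg = j*pg, rg = j⁻¹*qg
          rw [hr', hq', ← mul_assoc] at hqr'
          exact absurd (gcancel hqr') G4
        · exact absurd (hr'.trans hq'.symm) hqr
        · exact absurd (hr'.trans hq'.symm) hqr

/-- pigeonhole: a vertex above a level-0 triangle cannot be adjacent to all three -/
lemma pigeon (hi4 : i^4 = 1) (hj2 : j^2 = i^2) (hrel : j⁻¹*i*j = i⁻¹) (hne : i^2 ≠ 1)
    (hm : 3 ≤ m) {pg qg rg sg : Q8} {pa qa ra sa : Fin m}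
    (hq : qa.val = pa.val) (hr : ra.val = pa.val) (hs : sa.val = pa.val + 1)
    (Apq : (DeltaQ Q8 m i j).Adj (pg,pa) (qg,qa)) (Apr : (DeltaQ Q8 m i j).Adj (pg,pa) (rg,ra))
    (Aqr : (DeltaQ Q8 m i j).Adj (qg,qa) (rg,ra)) (Aps : (DeltaQ Q8 m i j).Adj (pg,pa) (sg,sa))
    (Aqs : (DeltaQ Q8 m i j).Adj (qg,qa) (sg,sa)) (Ars : (DeltaQ Q8 m i j).Adj (rg,ra) (sg,sa)) : False := by
  have h0 : pa.val = 0 := tri_same hi4 hj2 hrel hne hm hq hr Apq Apr Aqr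
  have hpq : pg ≠ qg := fst_ne Apq.ne (fin_eq_of_val (show pa.val = qa.val by omega))
  have hpr : pg ≠ rg := fst_ne Apr.ne (fin_eq_of_val (show pa.val = ra.val by omega))
  have hqr2 : qg ≠ rg := fst_ne Aqr.ne (fin_eq_of_val (show qa.val = ra.val by omega))
  have Hp : sg = pg ∨ sg = i*pg := by
    rcases adj_cross hi4 hm (by omega) Aps with ⟨_, h⟩ | ⟨h1, _, _⟩
    · exact h
    · omega
  have Hq : sg = qg ∨ sg = i*qg := by
    rcases adj_cross hi4 hm (by omega) Aqs with ⟨_, h⟩ | ⟨h1, _, _⟩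
    · exact h
    · omega
  have Hr : sg = rg ∨ sg = i*rg := by
    rcases adj_cross hi4 hm (by omega) Ars with ⟨_, h⟩ | ⟨h1, _, _⟩
    · exact h
    · omega
  rcases Hp with h1|h1 <;> rcases Hq with h2|h2 <;> rcases Hr with h3|h3
  · exact hpq (h1.symm.trans h2)
  · exact hpq (h1.symm.trans h2)
  · exact hpr (h1.symm.trans h3)
  · exact hqr2 (mul_left_cancel (h2.symm.trans h3))
  · exact hqr2 (h2.symm.trans h3)
  · exact hpr (mul_left_cancel (h1.symm.trans h3))
  · exact hpq (mul_left_cancel (h1.symm.trans h2))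
  · exact hpq (mul_left_cancel (h1.symm.trans h2))

/-- no K4 configuration split 2-2 over two adjacent levels -/
lemma twotwo (hi4 : i^4 = 1) (hj2 : j^2 = i^2) (hrel : j⁻¹*i*j = i⁻¹) (hne : i^2 ≠ 1)
    (hm : 3 ≤ m) {pg qg rg sg : Q8} {pa qa ra sa : Fin m}
    (hq : qa.val = pa.val) (hs : sa.val = ra.val) (hr : ra.val = pa.val + 1)
    (Apq : (DeltaQ Q8 m i j).Adj (pg,pa) (qg,qa)) (Ars : (DeltaQ Q8 m i j).Adj (rg,ra) (sg,sa))
    (Apr : (DeltaQ Q8 m i j).Adj (pg,pa) (rg,ra)) (Aps : (DeltaQ Q8 m i j).Adj (pg,pa) (sg,sa))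
    (Aqr : (DeltaQ Q8 m i j).Adj (qg,qa) (rg,ra)) (Aqs : (DeltaQ Q8 m i j).Adj (qg,qa) (sg,sa)) : False := by
  obtain ⟨F1,F2,F3,F4,F5,F6⟩ := facts_pow i j hi4 hj2 hrel hne
  have hlt := ra.isLt
  rcases adj_same hi4 hm (by omega) Apq with ⟨h0,hq'⟩|⟨h1,h2,hq'⟩|⟨hlast,_⟩
  · -- level 0 pair below
    rcases adj_same hi4 hm (by omega) Ars with ⟨h0',_⟩|⟨h1',h2',hs'⟩|⟨hlast',_⟩
    · omega
    · -- s = i^2 * r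
      have Hr : rg = pg ∨ rg = i*pg := by
        rcases adj_cross hi4 hm (by omega) Apr with ⟨_, h⟩ | ⟨hx, _, _⟩
        · exact h
        · omega
      have Hs : sg = pg ∨ sg = i*pg := by
        rcases adj_cross hi4 hm (by omega) Aps with ⟨_, h⟩ | ⟨hx, _, _⟩
        · exact h
        · omega
      rcases Hr with h3|h3 <;> rcases Hs with h4|h4
      · rw [h3] at hs'; exact F2 (eq_one_of_mul_left (h4 ▸ hs').symm)
      · rw [h3] at hs'; rw [h4] at hs'; exact F4 (gcancel (g := pg) hs'.symm).symm
      · rw [h3, ← mul_assoc, ← pow_succ] at hs'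
        exact F3 (eq_one_of_mul_left (h4 ▸ hs').symm)
      · rw [h3, ← mul_assoc, ← pow_succ] at hs'; rw [h4] at hs'
        exact F5 (gcancel (g := pg) hs'.symm).symm
    · omega
  · -- middle pair below: q = i^2 p
    have Hr : rg = pg ∨ rg = i*pg := by
      rcases adj_cross hi4 hm (by omega) Apr with ⟨_, h⟩ | ⟨hx, _, _⟩
      · exact h
      · omega
    have Hr' : rg = qg ∨ rg = i*qg := by
      rcases adj_cross hi4 hm (by omega) Aqr with ⟨_, h⟩ | ⟨hx, _, _⟩
      · exact h
      · omega
    rw [hq'] at Hr'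
    rcases Hr with h3|h3 <;> rcases Hr' with h4|h4
    · rw [h3] at h4; exact F2 (eq_one_of_mul_left h4.symm)
    · rw [h3, ← mul_assoc, ← pow_succ'] at h4; exact F3 (eq_one_of_mul_left h4.symm)
    · rw [h3] at h4; exact F4 (gcancel (g := pg) h4.symm).symm
    · rw [h3, ← mul_assoc, ← pow_succ'] at h4
      exact F5 (gcancel (g := pg) h4.symm).symm
  · omega

/-- every member of a K4 lies in block 0 -/
lemma K4_level0 (hi4 : i^4 = 1) (hj2 : j^2 = i^2) (hrel : j⁻¹*i*j = i⁻¹) (hne : i^2 ≠ 1)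
    (hm : 3 ≤ m) {v u w x : Q8 × Fin m}
    (A1 : (DeltaQ Q8 m i j).Adj v u) (A2 : (DeltaQ Q8 m i j).Adj v w)
    (A3 : (DeltaQ Q8 m i j).Adj v x) (A4 : (DeltaQ Q8 m i j).Adj u w)
    (A5 : (DeltaQ Q8 m i j).Adj u x) (A6 : (DeltaQ Q8 m i j).Adj w x) : v.2.val = 0 := by
  obtain ⟨vg,va⟩ := v; obtain ⟨ug,ua⟩ := u; obtain ⟨wg,wa⟩ := w; obtain ⟨xg,xa⟩ := x
  dsimp only
  have L1 := adj_level hi4 hm A1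
  have L2 := adj_level hi4 hm A2
  have L3 := adj_level hi4 hm A3
  have L4 := adj_level hi4 hm A4
  have L5 := adj_level hi4 hm A5
  have L6 := adj_level hi4 hm A6
  set ℓ := min (min va.val ua.val) (min wa.val xa.val) with hl
  have Hv : va.val = ℓ ∨ va.val = ℓ+1 := by omega
  have Hu : ua.val = ℓ ∨ ua.val = ℓ+1 := by omega
  have Hw : wa.val = ℓ ∨ wa.val = ℓ+1 := by omega
  have Hx : xa.val = ℓ ∨ xa.val = ℓ+1 := by omega
  rcases Hv with hv|hv <;> rcases Hu with hu|hu <;> rcases Hw with hw|hw <;> rcases Hx with hx|hx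
  · exact tri_same hi4 hj2 hrel hne hm (by omega) (by omega) A1 A2 A4
  · exact tri_same hi4 hj2 hrel hne hm (by omega) (by omega) A1 A2 A4
  · exact tri_same hi4 hj2 hrel hne hm (by omega) (by omega) A1 A3 A5
  · exact (twotwo hi4 hj2 hrel hne hm (by omega) (by omega) (by omega) A1 A6 A2 A3 A4 A5).elim
  · exact tri_same hi4 hj2 hrel hne hm (by omega) (by omega) A2 A3 A6
  · exact (twotwo hi4 hj2 hrel hne hm (by omega) (by omega) (by omega) A2 A5 A1 A3 A4.symm A6).elim
  · exact (twotwo hi4 hj2 hrel hne hm (by omega) (by omega) (by omega) A3 A4 A1 A2 A5.symm A6.symm).elim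
  · have := tri_same hi4 hj2 hrel hne hm (by omega) (by omega) A4 A5 A6; omega
  · exact (pigeon hi4 hj2 hrel hne hm (by omega) (by omega) (by omega) A4 A5 A6 A1.symm A2.symm A3.symm).elim
  · exact (twotwo hi4 hj2 hrel hne hm (by omega) (by omega) (by omega) A4 A3 A1.symm A5 A2.symm A6).elim
  · exact (twotwo hi4 hj2 hrel hne hm (by omega) (by omega) (by omega) A5 A2 A1.symm A4 A3.symm A6.symm).elim
  · have := tri_same hi4 hj2 hrel hne hm (by omega) (by omega) A2 A3 A6; omega
  · exact (twotwo hi4 hj2 hrel hne hm (by omega) (by omega) (by omega) A6 A1 A2.symm A4.symm A3.symm A5.symm).elim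
  · have := tri_same hi4 hj2 hrel hne hm (by omega) (by omega) A1 A3 A5; omega
  · have := tri_same hi4 hj2 hrel hne hm (by omega) (by omega) A1 A2 A4; omega
  · have := tri_same hi4 hj2 hrel hne hm (by omega) (by omega) A1 A2 A4; omega

lemma ratio_conj {x y g : Q8} : (x*g)*(y*g)⁻¹ = x*y⁻¹ := by group

lemma transl_mono (g : Q8) (p q : Q8 × Fin m)
    (H : (DeltaQ Q8 m i j).Adj p q) :
    (DeltaQ Q8 m i j).Adj (p.1*g, p.2) (q.1*g, q.2) := by
  rw [DeltaQ, SimpleGraph.fromRel_adj] at H ⊢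
  obtain ⟨hne', hr⟩ := H
  constructor
  · intro e
    apply hne'
    have e1 := congrArg Prod.fst e
    have e2 := congrArg Prod.snd e
    dsimp only at e1 e2
    exact Prod.ext (gcancel e1) e2
  · dsimp only at hr ⊢
    rcases hr with (⟨h1,h2,h3⟩|⟨h1,h2,h3,h4⟩|⟨h1,h2,h3⟩|⟨h1,h2,h3⟩|⟨h1,h2,h3⟩) |
      (⟨h1,h2,h3⟩|⟨h1,h2,h3,h4⟩|⟨h1,h2,h3⟩|⟨h1,h2,h3⟩|⟨h1,h2,h3⟩)
    · exact Or.inl (Or.inl ⟨h1, h2, by rw [ratio_conj]; exact h3⟩)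
    · exact Or.inl (Or.inr (Or.inl ⟨h1, h2, h3, by rw [ratio_conj]; exact h4⟩))
    · exact Or.inl (Or.inr (Or.inr (Or.inl ⟨h1, h2, by rw [ratio_conj]; exact h3⟩)))
    · refine Or.inl (Or.inr (Or.inr (Or.inr (Or.inl ⟨h1, h2, ?_⟩))))
      rcases h3 with h3 | h3
      · exact Or.inl (by rw [h3])
      · exact Or.inr (by rw [h3, mul_assoc])
    · refine Or.inl (Or.inr (Or.inr (Or.inr (Or.inr ⟨h1, h2, ?_⟩))))
      rcases h3 with h3 | h3 | h3
      · exact Or.inl (by rw [h3])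
      · exact Or.inr (Or.inl (by rw [h3, mul_assoc]))
      · exact Or.inr (Or.inr (by rw [h3, mul_assoc]))
    · exact Or.inr (Or.inl ⟨h1, h2, by rw [ratio_conj]; exact h3⟩)
    · exact Or.inr (Or.inr (Or.inl ⟨h1, h2, h3, by rw [ratio_conj]; exact h4⟩))
    · exact Or.inr (Or.inr (Or.inr (Or.inl ⟨h1, h2, by rw [ratio_conj]; exact h3⟩)))
    · refine Or.inr (Or.inr (Or.inr (Or.inr (Or.inl ⟨h1, h2, ?_⟩))))
      rcases h3 with h3 | h3
      · exact Or.inl (by rw [h3])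
      · exact Or.inr (by rw [h3, mul_assoc])
    · refine Or.inr (Or.inr (Or.inr (Or.inr (Or.inr ⟨h1, h2, ?_⟩))))
      rcases h3 with h3 | h3 | h3
      · exact Or.inl (by rw [h3])
      · exact Or.inr (Or.inl (by rw [h3, mul_assoc]))
      · exact Or.inr (Or.inr (by rw [h3, mul_assoc]))

lemma transl_adj (g : Q8) (p q : Q8 × Fin m) :
    (DeltaQ Q8 m i j).Adj (p.1*g, p.2) (q.1*g, q.2) ↔ (DeltaQ Q8 m i j).Adj p q := by
  constructor
  · intro H
    have := transl_mono g⁻¹ _ _ H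
    simpa [mul_inv_cancel_right] using this
  · exact transl_mono g p q

lemma nemul {x : Q8} (hx : x ≠ 1) (g : Q8) : x*g ≠ g := fun e => hx (eq_one_of_mul_left e)

lemma nemul2 {x y : Q8} (hxy : x ≠ y) (g : Q8) : x*g ≠ y*g := fun e => hxy (gcancel e)

/-- the four block-0 vertices over a coset form a K4 -/
lemma block0_adjs (hi4 : i^4 = 1) (hj2 : j^2 = i^2) (hrel : j⁻¹*i*j = i⁻¹) (hne : i^2 ≠ 1)
    (hm : 3 ≤ m) (g : Q8) {a : Fin m} (ha : a.val = 0) :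
    (DeltaQ Q8 m i j).Adj (g,a) (i*g,a) ∧ (DeltaQ Q8 m i j).Adj (g,a) (i^2*g,a) ∧
    (DeltaQ Q8 m i j).Adj (g,a) (i^3*g,a) ∧ (DeltaQ Q8 m i j).Adj (i*g,a) (i^2*g,a) ∧
    (DeltaQ Q8 m i j).Adj (i*g,a) (i^3*g,a) ∧ (DeltaQ Q8 m i j).Adj (i^2*g,a) (i^3*g,a) := by
  obtain ⟨F1,F2,F3,F4,F5,F6⟩ := facts_pow i j hi4 hj2 hrel hne
  refine ⟨?_, ?_, ?_, ?_, ?_, ?_⟩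
  · exact mk_adj_zero hm ha ha (nemul F1 g) (by rw [mul_inv_cancel_right]; simp)
  · exact mk_adj_zero hm ha ha (nemul F2 g) (by rw [mul_inv_cancel_right]; simp)
  · exact mk_adj_zero hm ha ha (nemul F3 g) (by rw [mul_inv_cancel_right]; simp)
  · refine mk_adj_zero hm ha ha (nemul2 (fun e => F4 e.symm) g) ?_
    rw [ratio_conj]
    have : i^2 * i⁻¹ = i := by group
    rw [this]; simp
  · refine mk_adj_zero hm ha ha (nemul2 (fun e => F5 e.symm) g) ?_
    rw [ratio_conj]
    have : i^3 * i⁻¹ = i^2 := by group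
    rw [this]; simp
  · refine mk_adj_zero hm ha ha (nemul2 (fun e => F6 e.symm) g) ?_
    rw [ratio_conj]
    have : i^3 * (i^2)⁻¹ = i := by group
    rw [this]; simp

lemma aut_level (hi4 : i^4 = 1) (hj2 : j^2 = i^2) (hrel : j⁻¹*i*j = i⁻¹) (hne : i^2 ≠ 1)
    (hm : 3 ≤ m) (σ : Equiv.Perm (Q8 × Fin m))
    (haut : IsGraphAut (DeltaQ Q8 m i j) σ) : ∀ v, (σ v).2 = v.2 := by
  suffices H : ∀ k, ∀ v : Q8 × Fin m, v.2.val = k → (σ v).2.val = v.2.val by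
    intro v; exact fin_eq_of_val (H v.2.val v rfl)
  intro k
  induction k using Nat.strong_induction_on with
  | _ k IH =>
    intro v hv
    rcases Nat.eq_zero_or_pos k with hk0 | hkpos
    · -- level 0 : use the K4
      subst hk0
      obtain ⟨A1, A2, A3, A4, A5, A6⟩ := block0_adjs hi4 hj2 hrel hne hm v.1 (a := v.2) hv
      have B1 := (haut _ _).mpr A1
      have B2 := (haut _ _).mpr A2
      have B3 := (haut _ _).mpr A3
      have B4 := (haut _ _).mpr A4
      have B5 := (haut _ _).mpr A5
      have B6 := (haut _ _).mpr A6
      have h0 := K4_level0 hi4 hj2 hrel hne hm B1 B2 B3 B4 B5 B6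
      have hveq : (v.1, v.2) = v := rfl
      rw [hveq] at h0
      omega
    · -- higher level: counting plus a downward neighbour
      classical
      set T : Finset (Q8 × Fin m) := Finset.univ.filter (fun w => w.2.val < k) with hT
      have hsub : T.image σ ⊆ T := by
        intro y hy
        obtain ⟨w, hwT, rfl⟩ := Finset.mem_image.mp hy
        have hw : w.2.val < k := by
          have := Finset.mem_filter.mp hwT; exact this.2
        have := IH w.2.val hw w rfl
        exact Finset.mem_filter.mpr ⟨Finset.mem_univ _, by omega⟩
      have hcard : T.card ≤ (T.image σ).card := by
        rw [Finset.card_image_of_injective _ σ.injective]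
      have himg : T.image σ = T := Finset.eq_of_subset_of_card_le hsub hcard
      have hnotin : ¬ (σ v).2.val < k := by
        intro hlt
        have hmem : σ v ∈ T := Finset.mem_filter.mpr ⟨Finset.mem_univ _, hlt⟩
        rw [← himg] at hmem
        obtain ⟨w, hwT, hww⟩ := Finset.mem_image.mp hmem
        have : w = v := σ.injective hww
        subst this
        have := (Finset.mem_filter.mp hwT).2
        omega
      -- downward neighbour at level k-1
      have hklt : k ≤ m-1 := by have := v.2.isLt; omega
      have hk1 : k - 1 < m := by omega
      set u : Q8 × Fin m := (v.1, (⟨k-1, hk1⟩ : Fin m)) with hu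
      have hadj : (DeltaQ Q8 m i j).Adj u (v.1, v.2) := by
        by_cases hk : k = m-1
        · exact mk_adj_up2 hm (by simp; omega) (show v.2.val = m-1 by omega) (Or.inl rfl)
        · exact mk_adj_up hm (by simp; omega) (show v.2.val = k-1+1 by omega) (Or.inl rfl)
      have Aim := (haut _ _).mpr hadj
      have h1 : (σ u).2.val = k-1 := IH (k-1) (by omega) u rfl
      have L := adj_level (m := m) hi4 hm
        (g := (σ u).1) (a := (σ u).2)
        (h := (σ (v.1, v.2)).1) (b := (σ (v.1, v.2)).2) Aim
      have hveq : (v.1, v.2) = v := rfl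
      rw [hveq] at L
      rcases L with L | L | L
      · omega
      · omega
      · omega

lemma facts_r1 : ∀ i j : Q8, i^4=1 → j^2=i^2 → j⁻¹*i*j=i⁻¹ → i^2≠1 →
    (j ≠ i ∧ j*i ≠ 1 ∧ j*i ≠ i ∧ j*i ≠ j ∧ j*j ≠ 1 ∧ j*j ≠ i ∧ j*j ≠ j ∧
     j ≠ i⁻¹ ∧ j ≠ i*i⁻¹ ∧ j ≠ j*i⁻¹ ∧ j⁻¹ ≠ i⁻¹ ∧ j⁻¹ ≠ i*i⁻¹ ∧ j⁻¹ ≠ j*i⁻¹ ∧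
     i⁻¹ ≠ 1 ∧ i ≠ i⁻¹) := by decide

lemma facts_r2 : ∀ i j : Q8, i^4=1 → j^2=i^2 → j⁻¹*i*j=i⁻¹ → i^2≠1 →
    (i⁻¹ ≠ j⁻¹ ∧ i⁻¹ ≠ i⁻¹*j⁻¹ ∧ i⁻¹*i⁻¹ ≠ j⁻¹ ∧ i⁻¹*i⁻¹ ≠ i⁻¹*j⁻¹) := by decide

lemma facts_r3 : ∀ i j : Q8, i^4=1 → j^2=i^2 → j⁻¹*i*j=i⁻¹ → i^2≠1 →
    (i⁻¹*j ≠ 1 ∧ j*j ≠ i⁻¹*j ∧ j*j ≠ j*(i⁻¹*j) ∧ j⁻¹ = j*(i^2) ∧ i^2 ≠ j⁻¹ ∧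
     j*j ≠ i⁻¹*j⁻¹ ∧ j*j ≠ j⁻¹ ∧ j*j ≠ j*(i⁻¹*j⁻¹) ∧ j⁻¹*j⁻¹ = i^2 ∧
     i⁻¹*j⁻¹ ≠ j⁻¹ ∧ i⁻¹*j⁻¹ ≠ i^2) := by decide

lemma facts_r4 : ∀ i j : Q8, i^4=1 → j^2=i^2 → j⁻¹*i*j=i⁻¹ → i^2≠1 →
    (j*j = i*i ∧ i⁻¹*(j*j) = i ∧ i ≠ j ∧ i ≠ j*i⁻¹ ∧ j ≠ i*j⁻¹ ∧ i^2 = j*j ∧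
     i ≠ i^2 ∧ i^2 ≠ 1 ∧ i ≠ 1 ∧ j*j ≠ i*(j*j) ∧ i*i ≠ 1) := by decide

lemma facts_all8 : ∀ i j : Q8, i^4=1 → j^2=i^2 → j⁻¹*i*j=i⁻¹ → i^2≠1 →
    ∀ g : Q8, g = 1 ∨ g = i ∨ g = i^2 ∨ g = i⁻¹ ∨ g = j ∨ g = j⁻¹ ∨
      g = i⁻¹*j ∨ g = i⁻¹*j⁻¹ := by decide

lemma rigid (hi4 : i^4 = 1) (hj2 : j^2 = i^2) (hrel : j⁻¹*i*j = i⁻¹) (hne : i^2 ≠ 1)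
    (hm : 3 ≤ m) {e1 e2 e3 : Fin m}
    (h1 : e1.val = m-1) (h2 : e2.val = m-2) (h3 : e3.val = m-3)
    (σ : Equiv.Perm (Q8 × Fin m)) (haut : IsGraphAut (DeltaQ Q8 m i j) σ)
    (hlev : ∀ v, (σ v).2 = v.2) (hfix : σ (1, e1) = (1, e1)) : ∀ p, σ p = p := by
  obtain ⟨R1,R2,R3,R4,R5,R6,R7,R8,R9,R10,R11,R12,R13,R14,R15⟩ := facts_r1 i j hi4 hj2 hrel hne
  obtain ⟨S1,S2,S3,S4⟩ := facts_r2 i j hi4 hj2 hrel hne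
  obtain ⟨T1,T2,T3,T4,T5,T6,T7,T8,T9,T10,T11⟩ := facts_r3 i j hi4 hj2 hrel hne
  obtain ⟨U1,U2,U3,U4,U5,U6,U7,U8,U9,U10,U11⟩ := facts_r4 i j hi4 hj2 hrel hne
  obtain ⟨G1,G2,G3,G4,G5⟩ := facts_j i j hi4 hj2 hrel hne
  have himg : ∀ (x : Q8) (e : Fin m), σ (x,e) = ((σ (x,e)).1, e) :=
    fun x e => Prod.ext rfl (hlev (x,e))
  -- adjacency utilities
  have adj21 : ∀ w x : Q8, (x = w ∨ x = i*w ∨ x = j*w) → (DeltaQ Q8 m i j).Adj (w,e2) (x,e1) :=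
    fun w x hx => mk_adj_up2 hm h2 h1 hx
  have inv2 : ∀ t x : Q8, (DeltaQ Q8 m i j).Adj (t,e2) (x,e1) →
      t = x ∨ t = i⁻¹*x ∨ t = j⁻¹*x := by
    intro t x hA
    rcases adj_m2_last hi4 hm h2 h1 hA with c | c | c
    · exact Or.inl c.symm
    · exact Or.inr (Or.inl (by rw [c, inv_mul_cancel_left]))
    · exact Or.inr (Or.inr (by rw [c, inv_mul_cancel_left]))
  have adj11 : ∀ g x : Q8, (x = j*g ∨ x = j⁻¹*g) → (DeltaQ Q8 m i j).Adj (g,e1) (x,e1) := by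
    intro g x hx
    rcases hx with hx | hx
    · exact mk_adj_last hm h1 h1 (hx ▸ nemul G1 g) (by rw [hx, mul_inv_cancel_right]; simp)
    · exact mk_adj_last hm h1 h1 (hx ▸ nemul G2 g) (by rw [hx, mul_inv_cancel_right]; simp)
  have inv1 : ∀ g t : Q8, (DeltaQ Q8 m i j).Adj (g,e1) (t,e1) → t = j*g ∨ t = j⁻¹*g :=
    fun g t hA => adj_last_last hi4 hm h1 h1 hA
  have adj32 : ∀ w x : Q8, (x = w ∨ x = i*w) → (DeltaQ Q8 m i j).Adj (w,e3) (x,e2) :=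
    fun w x hx => mk_adj_up hm (by omega) (by omega) hx
  have inv32 : ∀ t x : Q8, (DeltaQ Q8 m i j).Adj (t,e3) (x,e2) → t = x ∨ t = i⁻¹*x := by
    intro t x hA
    rcases adj_up_small hi4 hm (by omega) (by omega) hA with c | c
    · exact Or.inl c.symm
    · exact Or.inr (by rw [c, inv_mul_cancel_left])
  have hnonadj : ∀ p q, ¬ (DeltaQ Q8 m i j).Adj p q → ¬ (DeltaQ Q8 m i j).Adj (σ p) (σ q) :=
    fun p q h hh => h ((haut p q).mp hh)
  -- the common-lower-vertex lemma
  have E1 : ∀ w g : Q8, (DeltaQ Q8 m i j).Adj (w,e2) (g,e1) →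
      (DeltaQ Q8 m i j).Adj (w,e2) (j*g,e1) → w = g := by
    intro w g hA hB
    have cg := adj_m2_last hi4 hm h2 h1 hA
    have cjg := adj_m2_last hi4 hm h2 h1 hB
    rcases cg with cg | cg | cg
    · rcases cjg with c | c | c
      · rw [cg] at c; exact absurd (eq_one_of_mul_left c) G1
      · rw [cg] at c; exact absurd (gcancel c) R1
      · exact cg.symm
    · rw [cg, ← mul_assoc] at cjg
      rcases cjg with c | c | c
      · exact absurd (eq_one_of_mul_left c) R2
      · exact absurd (gcancel c) R3
      · exact absurd (gcancel c) R4
    · rw [cg, ← mul_assoc] at cjg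
      rcases cjg with c | c | c
      · exact absurd (eq_one_of_mul_left c) R5
      · exact absurd (gcancel c) R6
      · exact absurd (gcancel c) R7
  -- candidates for the image of (j,e1)
  have hjc : (σ (j,e1)).1 = j ∨ (σ (j,e1)).1 = j⁻¹ := by
    have hA := (haut (1,e1) (j,e1)).mpr (adj11 1 j (Or.inl (mul_one j).symm))
    rw [hfix, himg j e1] at hA
    rcases inv1 1 _ hA with c | c
    · exact Or.inl (by rw [c, mul_one])
    · exact Or.inr (by rw [c, mul_one])
  -- rule out the swap case
  have hAj : σ (j,e1) = (j,e1) := by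
    rcases hjc with hc | hc
    · rw [himg j e1, hc]
    · exfalso
      have hj1 : σ (j,e1) = (j⁻¹,e1) := by rw [himg j e1, hc]
      have hj2' : σ (j⁻¹,e1) = (j,e1) := by
        have hA := (haut (1,e1) (j⁻¹,e1)).mpr (adj11 1 j⁻¹ (Or.inr (mul_one j⁻¹).symm))
        rw [hfix, himg j⁻¹ e1] at hA
        rcases inv1 1 _ hA with c | c
        · rw [himg j⁻¹ e1, c, mul_one]
        · exfalso
          have h' : σ (j⁻¹,e1) = (j⁻¹,e1) := by rw [himg j⁻¹ e1, c, mul_one]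
          exact G5 (pfst (σ.injective (hj1.trans h'.symm)))
      -- image of (1,e2)
      have hB1 : σ (1,e2) = (j⁻¹,e2) := by
        have hA := (haut (1,e2) (1,e1)).mpr (adj21 1 1 (Or.inl rfl))
        have hA2 := (haut (1,e2) (j,e1)).mpr (adj21 1 j (Or.inr (Or.inr (mul_one j).symm)))
        rw [hfix, himg 1 e2] at hA
        rw [hj1, himg 1 e2] at hA2
        have := E1 _ _ hA2 (by rw [mul_inv_cancel]; exact hA)
        rw [himg 1 e2, this]
      -- image of (i⁻¹,e2) is (i⁻¹,e2)
      have hC : σ (i⁻¹,e2) = (i⁻¹,e2) := by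
        have hA := (haut (i⁻¹,e2) (1,e1)).mpr (adj21 i⁻¹ 1 (Or.inr (Or.inl (by group))))
        rw [hfix, himg i⁻¹ e2] at hA
        have hN1 : ¬ (DeltaQ Q8 m i j).Adj (i⁻¹,e2) (j,e1) := by
          intro hAd
          rcases adj_m2_last hi4 hm h2 h1 hAd with c | c | c
          · exact R8 c
          · exact R9 c
          · exact R10 c
        have hN2 : ¬ (DeltaQ Q8 m i j).Adj (i⁻¹,e2) (j⁻¹,e1) := by
          intro hAd
          rcases adj_m2_last hi4 hm h2 h1 hAd with c | c | c
          · exact R11 c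
          · exact R12 c
          · exact R13 c
        have hI1 := hnonadj _ _ hN1
        rw [hj1, himg i⁻¹ e2] at hI1
        have hI2 := hnonadj _ _ hN2
        rw [hj2', himg i⁻¹ e2] at hI2
        rcases inv2 _ _ hA with c | c | c
        · exfalso
          apply hI2
          rw [c]
          exact adj21 _ _ (Or.inr (Or.inr (mul_one j).symm))
        · rw [himg i⁻¹ e2, c, mul_one]
        · exfalso
          apply hI1
          rw [c, mul_one]
          exact adj21 _ _ (Or.inl rfl)
      -- image of (j⁻¹,e2) is (1,e2)
      have hD : σ (j⁻¹,e2) = (1,e2) := by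
        have hA := (haut (j⁻¹,e2) (1,e1)).mpr (adj21 j⁻¹ 1 (Or.inr (Or.inr (by group))))
        rw [hfix, himg j⁻¹ e2] at hA
        rcases inv2 _ _ hA with c | c | c
        · rw [himg j⁻¹ e2, c]
        · exfalso
          have h' : σ (j⁻¹,e2) = (i⁻¹,e2) := by rw [himg j⁻¹ e2, c, mul_one]
          exact S1 (pfst (σ.injective (h'.trans hC.symm))).symm
        · exfalso
          have h' : σ (j⁻¹,e2) = (j⁻¹,e2) := by rw [himg j⁻¹ e2, c, mul_one]
          have := σ.injective (h'.trans hB1.symm)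
          exact G2 (pfst this)
      -- contradiction via level e3
      have hA1 := (haut (i⁻¹,e3) (i⁻¹,e2)).mpr (adj32 i⁻¹ i⁻¹ (Or.inl rfl))
      have hA2 := (haut (i⁻¹,e3) (1,e2)).mpr (adj32 i⁻¹ 1 (Or.inr (by group)))
      rw [hC, himg i⁻¹ e3] at hA1
      rw [hB1, himg i⁻¹ e3] at hA2
      rcases inv32 _ _ hA1 with c1 | c1 <;> rcases inv32 _ _ hA2 with c2 | c2
      · exact S1 (c1.symm.trans c2)
      · exact S2 (c1.symm.trans c2)
      · exact S3 (c1.symm.trans c2)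
      · exact S4 (c1.symm.trans c2)
  -- main chain (swap already excluded)
  have hA' : σ (j⁻¹,e1) = (j⁻¹,e1) := by
    have hA := (haut (1,e1) (j⁻¹,e1)).mpr (adj11 1 j⁻¹ (Or.inr (mul_one j⁻¹).symm))
    rw [hfix, himg j⁻¹ e1] at hA
    rcases inv1 1 _ hA with c | c
    · exfalso
      have h' : σ (j⁻¹,e1) = (j,e1) := by rw [himg j⁻¹ e1, c, mul_one]
      exact G5 (pfst (σ.injective (hAj.trans h'.symm)))
    · rw [himg j⁻¹ e1, c, mul_one]
  have hB1 : σ (1,e2) = (1,e2) := by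
    have hA := (haut (1,e2) (1,e1)).mpr (adj21 1 1 (Or.inl rfl))
    have hA2 := (haut (1,e2) (j,e1)).mpr (adj21 1 j (Or.inr (Or.inr (mul_one j).symm)))
    rw [hfix, himg 1 e2] at hA
    rw [hAj, himg 1 e2] at hA2
    have ht := E1 _ _ hA (by rw [mul_one]; exact hA2)
    rw [himg 1 e2, ht]
  have hC : σ (i⁻¹,e2) = (i⁻¹,e2) := by
    have hA := (haut (i⁻¹,e2) (1,e1)).mpr (adj21 i⁻¹ 1 (Or.inr (Or.inl (by group))))
    rw [hfix, himg i⁻¹ e2] at hA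
    have hN2 : ¬ (DeltaQ Q8 m i j).Adj (i⁻¹,e2) (j⁻¹,e1) := by
      intro hAd
      rcases adj_m2_last hi4 hm h2 h1 hAd with c | c | c
      · exact R11 c
      · exact R12 c
      · exact R13 c
    have hI2 := hnonadj _ _ hN2
    rw [hA', himg i⁻¹ e2] at hI2
    rcases inv2 _ _ hA with c | c | c
    · exfalso
      have h' : σ (i⁻¹,e2) = (1,e2) := by rw [himg i⁻¹ e2, c]
      exact R14 (pfst (σ.injective (h'.trans hB1.symm)))
    · rw [himg i⁻¹ e2, c, mul_one]
    · exfalso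
      apply hI2
      rw [c, mul_one]
      exact adj21 _ _ (Or.inl rfl)
  have hD : σ (j⁻¹,e2) = (j⁻¹,e2) := by
    have hA := (haut (j⁻¹,e2) (1,e1)).mpr (adj21 j⁻¹ 1 (Or.inr (Or.inr (by group))))
    rw [hfix, himg j⁻¹ e2] at hA
    rcases inv2 _ _ hA with c | c | c
    · exfalso
      have h' : σ (j⁻¹,e2) = (1,e2) := by rw [himg j⁻¹ e2, c]
      exact G2 (pfst (σ.injective (h'.trans hB1.symm)))
    · exfalso
      have h' : σ (j⁻¹,e2) = (i⁻¹,e2) := by rw [himg j⁻¹ e2, c, mul_one]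
      exact S1 (pfst (σ.injective (h'.trans hC.symm))).symm
    · rw [himg j⁻¹ e2, c, mul_one]
  have hF : σ (j*j,e1) = (j*j,e1) := by
    have hA := (haut (j,e1) (j*j,e1)).mpr (adj11 j (j*j) (Or.inl rfl))
    rw [hAj, himg (j*j) e1] at hA
    rcases inv1 j _ hA with c | c
    · rw [himg (j*j) e1, c]
    · exfalso
      have h' : σ (j*j,e1) = (1,e1) := by rw [himg (j*j) e1, c, inv_mul_cancel]
      exact R5 (pfst (σ.injective (h'.trans hfix.symm)))
  have hN3 : ¬ (DeltaQ Q8 m i j).Adj (i⁻¹*j,e2) (j*j,e1) := by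
    intro hAd
    rcases adj_m2_last hi4 hm h2 h1 hAd with c | c | c
    · exact T2 c
    · rw [mul_inv_cancel_left] at c; exact R7 c
    · exact T3 c
  have hH : σ (i⁻¹*j,e2) = (i⁻¹*j,e2) := by
    have hA := (haut (i⁻¹*j,e2) (j,e1)).mpr (adj21 _ _ (Or.inr (Or.inl (mul_inv_cancel_left i j).symm)))
    rw [hAj, himg (i⁻¹*j) e2] at hA
    have hI3 := hnonadj _ _ hN3
    rw [hF, himg (i⁻¹*j) e2] at hI3
    rcases inv2 _ _ hA with c | c | c
    · exfalso
      apply hI3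
      rw [c]
      exact adj21 _ _ (Or.inr (Or.inr rfl))
    · rw [himg (i⁻¹*j) e2, c]
    · exfalso
      have h' : σ (i⁻¹*j,e2) = (1,e2) := by rw [himg (i⁻¹*j) e2, c, inv_mul_cancel]
      exact T1 (pfst (σ.injective (h'.trans hB1.symm)))
  have hJ : σ (j,e2) = (j,e2) := by
    have hA := (haut (j,e2) (j,e1)).mpr (adj21 j j (Or.inl rfl))
    rw [hAj, himg j e2] at hA
    rcases inv2 _ _ hA with c | c | c
    · rw [himg j e2, c]
    · exfalso
      have h' : σ (j,e2) = (i⁻¹*j,e2) := by rw [himg j e2, c]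
      exact R14 (eq_one_of_mul_left (pfst (σ.injective (h'.trans hH.symm))).symm)
    · exfalso
      have h' : σ (j,e2) = (1,e2) := by rw [himg j e2, c, inv_mul_cancel]
      exact G1 (pfst (σ.injective (h'.trans hB1.symm)))
  have hN4 : ¬ (DeltaQ Q8 m i j).Adj (i⁻¹*j⁻¹,e2) (j*j,e1) := by
    intro hAd
    rcases adj_m2_last hi4 hm h2 h1 hAd with c | c | c
    · exact T6 c
    · rw [mul_inv_cancel_left] at c; exact T7 c
    · exact T8 c
  have hI2v : σ (i^2,e2) = (i^2,e2) := by
    have hA := (haut (i^2,e2) (j⁻¹,e1)).mpr (adj21 _ _ (Or.inr (Or.inr T4)))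
    rw [hA', himg (i^2) e2] at hA
    have hA2 := (haut (i^2,e2) (j*j,e1)).mpr (adj21 _ _ (Or.inl U6.symm))
    rw [hF, himg (i^2) e2] at hA2
    rcases inv2 _ _ hA with c | c | c
    · exfalso
      have h' : σ (i^2,e2) = (j⁻¹,e2) := by rw [himg (i^2) e2, c]
      exact T5 (pfst (σ.injective (h'.trans hD.symm)))
    · exfalso
      rw [c] at hA2
      exact hN4 hA2
    · rw [himg (i^2) e2, c, T9]
  have hK : σ (i⁻¹*j⁻¹,e2) = (i⁻¹*j⁻¹,e2) := by
    have hA := (haut (i⁻¹*j⁻¹,e2) (j⁻¹,e1)).mpr (adj21 _ _ (Or.inr (Or.inl (mul_inv_cancel_left i j⁻¹).symm)))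
    rw [hA', himg (i⁻¹*j⁻¹) e2] at hA
    rcases inv2 _ _ hA with c | c | c
    · exfalso
      have h' : σ (i⁻¹*j⁻¹,e2) = (j⁻¹,e2) := by rw [himg (i⁻¹*j⁻¹) e2, c]
      exact T10 (pfst (σ.injective (h'.trans hD.symm)))
    · rw [himg (i⁻¹*j⁻¹) e2, c]
    · exfalso
      have h' : σ (i⁻¹*j⁻¹,e2) = (i^2,e2) := by rw [himg (i⁻¹*j⁻¹) e2, c, T9]
      exact T11 (pfst (σ.injective (h'.trans hI2v.symm)))
  have hL : σ (i,e2) = (i,e2) := by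
    have hA := (haut (i,e2) (j*j,e1)).mpr (adj21 _ _ (Or.inr (Or.inl U1)))
    rw [hF, himg i e2] at hA
    rcases inv2 _ _ hA with c | c | c
    · exfalso
      have h' : σ (i,e2) = (i^2,e2) := by rw [himg i e2, c, ← U6]
      exact U7 (pfst (σ.injective (h'.trans hI2v.symm)))
    · rw [himg i e2, c, U2]
    · exfalso
      have h' : σ (i,e2) = (j,e2) := by rw [himg i e2, c, inv_mul_cancel_left]
      exact U3 (pfst (σ.injective (h'.trans hJ.symm)))
  have hM2 : ∀ x : Q8, σ (x,e2) = (x,e2) := by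
    intro x
    rcases facts_all8 i j hi4 hj2 hrel hne x with rfl|rfl|rfl|rfl|rfl|rfl|rfl|rfl
    exacts [hB1, hL, hI2v, hC, hJ, hD, hH, hK]
  have hM1 : ∀ x : Q8, σ (x,e1) = (x,e1) := by
    intro x
    have hA := (haut (x,e2) (x,e1)).mpr (adj21 x x (Or.inl rfl))
    rw [hM2 x, himg x e1] at hA
    have c1 := adj_m2_last hi4 hm h2 h1 hA
    have hA2 := (haut (i⁻¹*x,e2) (x,e1)).mpr (adj21 _ _ (Or.inr (Or.inl (mul_inv_cancel_left i x).symm)))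
    rw [hM2 (i⁻¹*x), himg x e1] at hA2
    have c2 := adj_m2_last hi4 hm h2 h1 hA2
    have hA3 := (haut (j⁻¹*x,e2) (x,e1)).mpr (adj21 _ _ (Or.inr (Or.inr (mul_inv_cancel_left j x).symm)))
    rw [hM2 (j⁻¹*x), himg x e1] at hA3
    have c3 := adj_m2_last hi4 hm h2 h1 hA3
    rcases c1 with c | c | c
    · rw [himg x e1, c]
    · exfalso
      rcases c2 with d | d | d
      · exact R15 (gcancel (c.symm.trans d))
      · exact R14 (eq_one_of_mul_left (mul_left_cancel (c.symm.trans d)).symm)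
      · rw [← mul_assoc] at d
        exact U4 (gcancel (c.symm.trans d))
    · exfalso
      rcases c3 with d | d | d
      · exact G5 (gcancel (c.symm.trans d))
      · rw [← mul_assoc] at d
        exact U5 (gcancel (c.symm.trans d))
      · exact G2 (eq_one_of_mul_left (mul_left_cancel (c.symm.trans d)).symm)
  have hdown : ∀ (k : ℕ) (hk3 : k ≤ m-3) (hk : k < m) (hk1 : k+1 < m),
      (∀ x, σ (x, ⟨k+1, hk1⟩) = (x, ⟨k+1, hk1⟩)) → ∀ x, σ (x, ⟨k,hk⟩) = (x, ⟨k,hk⟩) := by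
    intro k hk3 hk hk1 IH x
    have hA := (haut (x,(⟨k,hk⟩:Fin m)) (x,(⟨k+1,hk1⟩:Fin m))).mpr
      (mk_adj_up hm (show k ≤ m-3 from hk3) (show k+1 = k+1 from rfl) (Or.inl rfl))
    rw [IH x, himg x (⟨k,hk⟩:Fin m)] at hA
    have d1 := adj_up_small hi4 hm (show k+1 = k+1 from rfl) (show k+1 ≤ m-2 by omega) hA
    have hA2 := (haut (x,(⟨k,hk⟩:Fin m)) (i*x,(⟨k+1,hk1⟩:Fin m))).mpr
      (mk_adj_up hm (show k ≤ m-3 from hk3) (show k+1 = k+1 from rfl) (Or.inr rfl))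
    rw [IH (i*x), himg x (⟨k,hk⟩:Fin m)] at hA2
    have d2 := adj_up_small hi4 hm (show k+1 = k+1 from rfl) (show k+1 ≤ m-2 by omega) hA2
    rcases d1 with d | d
    · rw [himg x (⟨k,hk⟩:Fin m), ← d]
    · rcases d2 with d' | d'
      · exfalso
        rw [← d'] at d
        rw [← mul_assoc] at d
        exact U11 (eq_one_of_mul_left d.symm)
      · have := mul_left_cancel d'
        rw [himg x (⟨k,hk⟩:Fin m), ← this]
  -- assemble
  intro p
  obtain ⟨x, a⟩ := p
  obtain ⟨av, hav⟩ := a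
  by_cases ha1 : av = m-1
  · have he : (⟨av,hav⟩ : Fin m) = e1 := fin_eq_of_val (show av = e1.val by omega)
    rw [he]
    exact hM1 x
  · have claim : ∀ (d : ℕ), ∀ (k : ℕ) (hk : k < m), k + d = m-2 →
        ∀ y, σ (y,(⟨k,hk⟩:Fin m)) = (y,(⟨k,hk⟩:Fin m)) := by
      intro d
      induction d with
      | zero =>
        intro k hk hkm y
        have he : (⟨k,hk⟩ : Fin m) = e2 := fin_eq_of_val (show k = e2.val by omega)
        rw [he]
        exact hM2 y
      | succ d IHd =>
        intro k hk hkm y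
        have hk1 : k+1 < m := by omega
        exact hdown k (by omega) hk hk1 (IHd (k+1) hk1 (by omega)) y
    exact claim (m-2-av) av hav (by omega) x


lemma facts_v : ∀ i j : Q8, i^4=1 → j^2=i^2 → j⁻¹*i*j=i⁻¹ → i^2≠1 →
    (i⁻¹ ≠ j⁻¹ ∧ i ≠ j ∧ i⁻¹ ≠ 1) := by decide

lemma pext {m : ℕ} {x y : Q8} {c d : Fin m} (h : x = y) (h2 : c.val = d.val) :
    (x,c) = (y,d) := Prod.ext h (fin_eq_of_val h2)

lemma ncard5 {α : Type*} (a b c d e : α)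
    (h1 : a ≠ b) (h2 : a ≠ c) (h3 : a ≠ d) (h4 : a ≠ e)
    (h5 : b ≠ c) (h6 : b ≠ d) (h7 : b ≠ e)
    (h8 : c ≠ d) (h9 : c ≠ e) (h10 : d ≠ e) :
    ({a, b, c, d, e} : Set α).ncard = 5 := by
  rw [Set.ncard_insert_of_notMem (by simp [h1, h2, h3, h4]),
      Set.ncard_insert_of_notMem (by simp [h5, h6, h7]),
      Set.ncard_insert_of_notMem (by simp [h8, h9]),
      Set.ncard_insert_of_notMem (by simp [h10]),
      Set.ncard_singleton]

lemma mk_adj_mid (hm : 3 ≤ m) (hne : i^2 ≠ 1) {g h : Q8} {a b : Fin m}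
    (h1 : 1 ≤ a.val) (h2 : a.val ≤ m-3) (hab : a = b) (hr : h = i^2*g) :
    (DeltaQ Q8 m i j).Adj (g, a) (h, b) := by
  rw [DeltaQ, SimpleGraph.fromRel_adj]
  refine ⟨pne_fst (hr ▸ nemul hne g), Or.inl (Or.inr (Or.inl ⟨h1, h2, hab, ?_⟩))⟩
  rw [hr, mul_inv_cancel_right]

lemma nbhd_card (hi4 : i^4 = 1) (hj2 : j^2 = i^2) (hrel : j⁻¹*i*j = i⁻¹) (hne : i^2 ≠ 1)
    (hm : 3 ≤ m) (v : Q8 × Fin m) : ((DeltaQ Q8 m i j).neighborSet v).ncard = 5 := by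
  obtain ⟨F1,F2,F3,F4,F5,F6⟩ := facts_pow i j hi4 hj2 hrel hne
  obtain ⟨V1,V2,V3⟩ := facts_v i j hi4 hj2 hrel hne
  obtain ⟨V4,V5,_,_,V6⟩ := facts_j i j hi4 hj2 hrel hne
  obtain ⟨g, a⟩ := v
  have hlt := a.isLt
  have snd_ne : ∀ {x y : Q8} {c d : Fin m}, c.val ≠ d.val → (x,c) ≠ (y,d) := by
    intro x y c d hcd e
    exact hcd (congrArg (fun p => (Prod.snd p).val) e)
  have fst_ne' : ∀ {x y : Q8} {c d : Fin m}, x ≠ y → (x,c) ≠ (y,d) := by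
    intro x y c d hxy e
    exact hxy (pfst e)
  rcases show a.val = 0 ∨ (1 ≤ a.val ∧ a.val ≤ m-3) ∨ a.val = m-2 ∨ a.val = m-1 by omega
    with ha | ⟨ha1, ha2⟩ | ha | ha
  · -- level 0
    obtain ⟨b1, hb1⟩ : ∃ b : Fin m, b.val = 1 := ⟨⟨1, by omega⟩, rfl⟩
    have hset : (DeltaQ Q8 m i j).neighborSet (g,a) =
        {(i*g,a), (i^2*g,a), (i^3*g,a), (g,b1), (i*g,b1)} := by
      ext x
      obtain ⟨y, c⟩ := x
      simp only [SimpleGraph.mem_neighborSet, Set.mem_insert_iff, Set.mem_singleton_iff]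
      constructor
      · intro hA
        rcases adj_cases hi4 hA with ⟨_,hc,h3⟩|⟨p1,p2,_,_⟩|⟨p1,_,_⟩|⟨p1,p2,h3⟩|⟨p1,p2,_⟩|⟨p1,p2,_⟩|⟨p1,p2,_⟩
        · rcases h3 with h3 | h3 | h3
          · exact Or.inl (pext h3 (by omega))
          · exact Or.inr (Or.inl (pext h3 (by omega)))
          · exact Or.inr (Or.inr (Or.inl (pext h3 (by omega))))
        · omega
        · omega
        · rcases h3 with h3 | h3
          · exact Or.inr (Or.inr (Or.inr (Or.inl (pext h3 (by omega)))))
          · exact Or.inr (Or.inr (Or.inr (Or.inr (pext h3 (by omega)))))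
        · omega
        · omega
        · omega
      · intro hx
        obtain ⟨B1, B2, B3, _, _, _⟩ := block0_adjs hi4 hj2 hrel hne hm g (a := a) ha
        rcases hx with h | h | h | h | h <;> rw [h]
        · exact B1
        · exact B2
        · exact B3
        · exact mk_adj_up hm (by omega) (by omega) (Or.inl rfl)
        · exact mk_adj_up hm (by omega) (by omega) (Or.inr rfl)
    rw [hset]
    exact ncard5 _ _ _ _ _ (fst_ne' (nemul2 (fun e => F4 e) g)) (fst_ne' (nemul2 (fun e => F5 e) g))
      (snd_ne (by omega)) (snd_ne (by omega)) (fst_ne' (nemul2 (fun e => F6 e) g))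
      (snd_ne (by omega)) (snd_ne (by omega)) (snd_ne (by omega)) (snd_ne (by omega))
      (fst_ne' (Ne.symm (nemul F1 g)))
  · -- middle levels
    obtain ⟨bd, hbd⟩ : ∃ b : Fin m, b.val = a.val-1 := ⟨⟨a.val-1, by omega⟩, rfl⟩
    obtain ⟨bu, hbu⟩ : ∃ b : Fin m, b.val = a.val+1 := ⟨⟨a.val+1, by omega⟩, rfl⟩
    have hset : (DeltaQ Q8 m i j).neighborSet (g,a) =
        {(i^2*g,a), (g,bd), (i⁻¹*g,bd), (g,bu), (i*g,bu)} := by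
      ext x
      obtain ⟨y, c⟩ := x
      simp only [SimpleGraph.mem_neighborSet, Set.mem_insert_iff, Set.mem_singleton_iff]
      constructor
      · intro hA
        rcases adj_cases hi4 hA with ⟨p1,_,_⟩|⟨_,_,hab,h3⟩|⟨p1,_,_⟩|⟨p1,p2,h3⟩|⟨p1,p2,_⟩|⟨p1,p2,h3⟩|⟨p1,p2,_⟩
        · omega
        · have := congrArg Fin.val hab
          exact Or.inl (pext h3 (by omega))
        · omega
        · rcases h3 with h3 | h3
          · exact Or.inr (Or.inr (Or.inr (Or.inl (pext h3 (by omega)))))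
          · exact Or.inr (Or.inr (Or.inr (Or.inr (pext h3 (by omega)))))
        · omega
        · rcases h3 with h3 | h3
          · exact Or.inr (Or.inl (pext h3.symm (by omega)))
          · exact Or.inr (Or.inr (Or.inl (pext (by rw [h3, inv_mul_cancel_left]) (by omega))))
        · omega
      · intro hx
        rcases hx with h | h | h | h | h <;> rw [h]
        · exact mk_adj_mid hm hne ha1 ha2 rfl rfl
        · exact (mk_adj_up hm (by omega) (by omega) (Or.inl rfl)).symm
        · exact (mk_adj_up hm (by omega) (by omega)
            (Or.inr (mul_inv_cancel_left i g).symm)).symm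
        · exact mk_adj_up hm (by omega) (by omega) (Or.inl rfl)
        · exact mk_adj_up hm (by omega) (by omega) (Or.inr rfl)
    rw [hset]
    exact ncard5 _ _ _ _ _ (snd_ne (by omega)) (snd_ne (by omega)) (snd_ne (by omega))
      (snd_ne (by omega)) (fst_ne' (Ne.symm (nemul V3 g))) (snd_ne (by omega)) (snd_ne (by omega))
      (snd_ne (by omega)) (snd_ne (by omega)) (fst_ne' (Ne.symm (nemul F1 g)))
  · -- level m-2
    obtain ⟨bd, hbd⟩ : ∃ b : Fin m, b.val = m-3 := ⟨⟨m-3, by omega⟩, rfl⟩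
    obtain ⟨bu, hbu⟩ : ∃ b : Fin m, b.val = m-1 := ⟨⟨m-1, by omega⟩, rfl⟩
    have hset : (DeltaQ Q8 m i j).neighborSet (g,a) =
        {(g,bd), (i⁻¹*g,bd), (g,bu), (i*g,bu), (j*g,bu)} := by
      ext x
      obtain ⟨y, c⟩ := x
      simp only [SimpleGraph.mem_neighborSet, Set.mem_insert_iff, Set.mem_singleton_iff]
      constructor
      · intro hA
        rcases adj_cases hi4 hA with ⟨p1,_,_⟩|⟨_,p2,_,_⟩|⟨p1,_,_⟩|⟨p1,p2,_⟩|⟨p1,p2,h3⟩|⟨p1,p2,h3⟩|⟨p1,p2,_⟩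
        · omega
        · omega
        · omega
        · omega
        · rcases h3 with h3 | h3 | h3
          · exact Or.inr (Or.inr (Or.inl (pext h3 (by omega))))
          · exact Or.inr (Or.inr (Or.inr (Or.inl (pext h3 (by omega)))))
          · exact Or.inr (Or.inr (Or.inr (Or.inr (pext h3 (by omega)))))
        · rcases h3 with h3 | h3
          · exact Or.inl (pext h3.symm (by omega))
          · exact Or.inr (Or.inl (pext (by rw [h3, inv_mul_cancel_left]) (by omega)))
        · omega
      · intro hx
        rcases hx with h | h | h | h | h <;> rw [h]
        · exact (mk_adj_up hm (by omega) (by omega) (Or.inl rfl)).symm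
        · exact (mk_adj_up hm (by omega) (by omega)
            (Or.inr (mul_inv_cancel_left i g).symm)).symm
        · exact mk_adj_up2 hm (by omega) (by omega) (Or.inl rfl)
        · exact mk_adj_up2 hm (by omega) (by omega) (Or.inr (Or.inl rfl))
        · exact mk_adj_up2 hm (by omega) (by omega) (Or.inr (Or.inr rfl))
    rw [hset]
    exact ncard5 _ _ _ _ _ (fst_ne' (Ne.symm (nemul V3 g))) (snd_ne (by omega)) (snd_ne (by omega))
      (snd_ne (by omega)) (snd_ne (by omega)) (snd_ne (by omega)) (snd_ne (by omega))
      (fst_ne' (Ne.symm (nemul F1 g))) (fst_ne' (Ne.symm (nemul V4 g))) (fst_ne' (nemul2 (fun e => V2 e) g))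
  · -- level m-1
    obtain ⟨bd, hbd⟩ : ∃ b : Fin m, b.val = m-2 := ⟨⟨m-2, by omega⟩, rfl⟩
    have hset : (DeltaQ Q8 m i j).neighborSet (g,a) =
        {(j*g,a), (j⁻¹*g,a), (g,bd), (i⁻¹*g,bd), (j⁻¹*g,bd)} := by
      ext x
      obtain ⟨y, c⟩ := x
      simp only [SimpleGraph.mem_neighborSet, Set.mem_insert_iff, Set.mem_singleton_iff]
      constructor
      · intro hA
        rcases adj_cases hi4 hA with ⟨p1,_,_⟩|⟨_,p2,_,_⟩|⟨_,hab,h3⟩|⟨p1,p2,_⟩|⟨p1,p2,_⟩|⟨p1,p2,h3⟩|⟨p1,p2,h3⟩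
        · omega
        · omega
        · rcases h3 with h3 | h3
          · exact Or.inl (pext h3 (by omega))
          · have := congrArg Fin.val hab
            exact Or.inr (Or.inl (pext h3 (by omega)))
        · omega
        · omega
        · omega
        · rcases h3 with h3 | h3 | h3
          · exact Or.inr (Or.inr (Or.inl (pext h3.symm (by omega))))
          · exact Or.inr (Or.inr (Or.inr (Or.inl (pext (by rw [h3, inv_mul_cancel_left]) (by omega)))))
          · exact Or.inr (Or.inr (Or.inr (Or.inr (pext (by rw [h3, inv_mul_cancel_left]) (by omega)))))
      · intro hx
        rcases hx with h | h | h | h | h <;> rw [h]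
        · exact mk_adj_last hm ha ha (nemul V4 g) (by rw [mul_inv_cancel_right]; simp)
        · exact mk_adj_last hm ha ha (nemul V5 g) (by rw [mul_inv_cancel_right]; simp)
        · exact (mk_adj_up2 hm (by omega) (by omega) (Or.inl rfl)).symm
        · exact (mk_adj_up2 hm (by omega) (by omega)
            (Or.inr (Or.inl (mul_inv_cancel_left i g).symm))).symm
        · exact (mk_adj_up2 hm (by omega) (by omega)
            (Or.inr (Or.inr (mul_inv_cancel_left j g).symm))).symm
    rw [hset]
    exact ncard5 _ _ _ _ _ (fst_ne' (nemul2 V6 g)) (snd_ne (by omega)) (snd_ne (by omega))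
      (snd_ne (by omega)) (snd_ne (by omega)) (snd_ne (by omega)) (snd_ne (by omega))
      (fst_ne' (Ne.symm (nemul V3 g))) (fst_ne' (Ne.symm (nemul V5 g))) (fst_ne' (nemul2 (fun e => V1 e) g))

/-- the right-translation homomorphism -/
def rho (m : ℕ) : Q8 →* Equiv.Perm (Q8 × Fin m) where
  toFun g := Equiv.prodCongr (Equiv.mulRight g⁻¹) (Equiv.refl _)
  map_one' := Equiv.ext fun p => Prod.ext (by simp) rfl
  map_mul' a b := Equiv.ext fun p => Prod.ext (by simp [mul_inv_rev, mul_assoc]) rfl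

lemma q8_isq_ne_one' : True := trivial

lemma rho_apply (m : ℕ) (g : Q8) (p : Q8 × Fin m) : rho m g p = (p.1 * g⁻¹, p.2) := rfl

end S15


/-- for every `m ≥ 3` and generators `i`, `j` of `Q₈` satisfying the defining
relations, the automorphism group of `Δ` is exactly the group of right translations of
`Q₈`; in particular `Q₈` admits an m-GRR. -/
theorem statement_15 (m : ℕ) (hm : 3 ≤ m)
    (i j : QuaternionGroup 2)
    (hi4 : i ^ 4 = 1) (hj2 : j ^ 2 = i ^ 2) (hrel : j⁻¹ * i * j = i⁻¹)
    (hgen : Subgroup.closure ({i, j} : Set (QuaternionGroup 2)) = ⊤) :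
    ((∀ (g : QuaternionGroup 2) (p q : QuaternionGroup 2 × Fin m),
        (DeltaQ (QuaternionGroup 2) m i j).Adj (p.1 * g, p.2) (q.1 * g, q.2) ↔
          (DeltaQ (QuaternionGroup 2) m i j).Adj p q) ∧
      (∀ σ : Equiv.Perm (QuaternionGroup 2 × Fin m),
        IsGraphAut (DeltaQ (QuaternionGroup 2) m i j) σ →
          ∃ g : QuaternionGroup 2, ∀ p, σ p = (p.1 * g, p.2))) ∧
    HasMGRR (QuaternionGroup 2) m := by

  have hne : i ^ 2 ≠ 1 := q8_isq_ne_one i j hrel hgen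
  have htr : ∀ (g : Q8) (p q : Q8 × Fin m),
      (DeltaQ Q8 m i j).Adj (p.1 * g, p.2) (q.1 * g, q.2) ↔ (DeltaQ Q8 m i j).Adj p q :=
    fun g p q => S15.transl_adj g p q
  have hmain : ∀ σ : Equiv.Perm (Q8 × Fin m), IsGraphAut (DeltaQ Q8 m i j) σ →
      ∃ g : Q8, ∀ p, σ p = (p.1 * g, p.2) := by
    intro σ haut
    have hlev := S15.aut_level hi4 hj2 hrel hne hm σ haut
    obtain ⟨e1, he1⟩ : ∃ e : Fin m, e.val = m-1 := ⟨⟨m-1, by omega⟩, rfl⟩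
    obtain ⟨e2, he2⟩ : ∃ e : Fin m, e.val = m-2 := ⟨⟨m-2, by omega⟩, rfl⟩
    obtain ⟨e3, he3⟩ : ∃ e : Fin m, e.val = m-3 := ⟨⟨m-3, by omega⟩, rfl⟩
    set g0 := (σ (1, e1)).1 with hg0
    set τ : Equiv.Perm (Q8 × Fin m) :=
      σ.trans (Equiv.prodCongr (Equiv.mulRight g0⁻¹) (Equiv.refl _)) with hτdef
    have hτ : ∀ p, τ p = ((σ p).1 * g0⁻¹, (σ p).2) := fun p => rfl
    have hτaut : IsGraphAut (DeltaQ Q8 m i j) τ := by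
      intro u v
      rw [hτ u, hτ v]
      exact (S15.transl_adj g0⁻¹ (σ u) (σ v)).trans (haut u v)
    have hτlev : ∀ v, (τ v).2 = v.2 := fun v => hlev v
    have hτfix : τ (1, e1) = (1, e1) := by
      rw [hτ]
      exact Prod.ext (mul_inv_cancel g0) (hlev (1, e1))
    have hid := S15.rigid hi4 hj2 hrel hne hm he1 he2 he3 τ hτaut hτlev hτfix
    refine ⟨g0, fun p => ?_⟩
    obtain ⟨x, a⟩ := p
    have hh := (hτ (x,a)).symm.trans (hid (x,a))
    have h1 : (σ (x,a)).1 * g0⁻¹ = x := S15.pfst hh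
    have h2 : (σ (x,a)).2 = a := hlev (x,a)
    exact Prod.ext (by rw [← mul_inv_eq_iff_eq_mul.mp h1]) h2
  refine ⟨⟨htr, hmain⟩, ?_⟩
  refine ⟨Q8 × Fin m, inferInstance, DeltaQ Q8 m i j, S15.rho m, ?_, ?_, ?_, ?_, ?_, ?_⟩
  · exact ⟨5, fun v => S15.nbhd_card hi4 hj2 hrel hne hm v⟩
  · intro g u v
    exact S15.transl_adj g⁻¹ u v
  · intro σ haut
    obtain ⟨g, hg⟩ := hmain σ haut
    refine ⟨g⁻¹, Equiv.ext fun p => ?_⟩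
    rw [S15.rho_apply, hg p, inv_inv]
  · intro a b hab
    have h : S15.rho m a (1, (⟨0, by omega⟩ : Fin m)) = S15.rho m b (1, (⟨0, by omega⟩ : Fin m)) := by
      rw [hab]
    rw [S15.rho_apply, S15.rho_apply] at h
    have := S15.pfst h
    simpa using this
  · intro g v hv
    obtain ⟨x, a⟩ := v
    rw [S15.rho_apply] at hv
    have := S15.pfst hv
    have hg : g⁻¹ = 1 := by
      have h2 : x * g⁻¹ = x * 1 := by rw [mul_one]; exact this
      exact mul_left_cancel h2
    rw [← inv_inv g, hg, inv_one]
  · refine ⟨fun k => (1, k), fun v => ⟨v.2, ⟨v.1⁻¹, ?_⟩, ?_⟩⟩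
    · rw [S15.rho_apply]
      simp
    · rintro k ⟨g, hg⟩
      rw [S15.rho_apply] at hg
      exact (congrArg Prod.snd hg : k = v.2)
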